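/- For all real numbers k, r with 0 < k ≤ r: ∫_k^r ℓ²·arccos(k/ℓ) dℓ = (r³/3)·arccos(k/r) − (k·r/6)·√(r² − k²) − (k³/6)·ln((r + √(r² − k²))/k). -/

import Mathlib

open intervalIntegral in
/-- `∫_k^r ℓ²·arccos(k/ℓ) dℓ = (r³/3)·arccos(k/r) − (kr/6)·√(r² − k²)
− (k³/6)·ln((r + √(r² − k²))/k)` for `0 < k ≤ r`. -/
theorem stmt_17 (k r : ℝ) (hk : 0 < k) (hkr : k ≤ r) :
    ∫ ℓ in k..r, ℓ ^ 2 * Real.arccos (k / ℓ) =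
      r ^ 3 / 3 * Real.arccos (k / r) -
        k * r / 6 * Real.sqrt (r ^ 2 - k ^ 2) -
        k ^ 3 / 6 * Real.log ((r + Real.sqrt (r ^ 2 - k ^ 2)) / k) := by
  set F : ℝ → ℝ := fun x => x ^ 3 / 3 * Real.arccos (k / x) -
      k * x / 6 * Real.sqrt (x ^ 2 - k ^ 2) -
      k ^ 3 / 6 * Real.log ((x + Real.sqrt (x ^ 2 - k ^ 2)) / k) with hF
  have hFk : F k = 0 := by
    simp [hF, div_self hk.ne', Real.arccos_one]
  have hcont : ContinuousOn F (Set.Icc k r) := by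
    apply ContinuousOn.sub
    apply ContinuousOn.sub
    · exact (continuousOn_pow 3 |>.div_const 3).mul
        (Real.continuous_arccos.comp_continuousOn
          (continuousOn_const.div continuousOn_id
            (fun x hx => (hk.trans_le hx.1).ne')))
    · exact ((continuousOn_const.mul continuousOn_id).div_const 6).mul
        ((continuousOn_pow 2 |>.sub continuousOn_const).sqrt)
    · apply ContinuousOn.mul continuousOn_const
      apply ContinuousOn.log
      · exact (continuousOn_id.add
          ((continuousOn_pow 2 |>.sub continuousOn_const).sqrt)).div_const k
      · intro x hx
        have hx0 : 0 < x := hk.trans_le hx.1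
        have : 0 < x + Real.sqrt (x ^ 2 - k ^ 2) :=
          lt_add_of_pos_of_le hx0 (Real.sqrt_nonneg _)
        positivity
  have hderiv : ∀ x ∈ Set.Ioo k r,
      HasDerivAt F (x ^ 2 * Real.arccos (k / x)) x := by
    intro x hx
    have hx0 : 0 < x := hk.trans hx.1
    have hsub : (0:ℝ) < x ^ 2 - k ^ 2 := by nlinarith [hx.1]
    set s := Real.sqrt (x ^ 2 - k ^ 2) with hsdef
    have hs : 0 < s := Real.sqrt_pos.2 hsub
    have hs2 : s ^ 2 = x ^ 2 - k ^ 2 := Real.sq_sqrt hsub.le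
    -- derivative of k / y
    have hinner : HasDerivAt (fun y : ℝ => k / y) (k * -(x ^ 2)⁻¹) x := by
      simpa [div_eq_mul_inv] using (hasDerivAt_inv hx0.ne').const_mul k
    -- arccos part
    have hkx : 0 < k / x := div_pos hk hx0
    have hne1 : k / x ≠ -1 := by intro he; rw [he] at hkx; linarith
    have hne2 : k / x ≠ 1 := by
      intro he
      rw [div_eq_one_iff_eq hx0.ne'] at he
      exact hx.1.ne he
    have harc : HasDerivAt (fun y : ℝ => Real.arccos (k / y))
        (-(1 / Real.sqrt (1 - (k / x) ^ 2)) * (k * -(x ^ 2)⁻¹)) x :=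
      (Real.hasDerivAt_arccos hne1 hne2).comp x hinner
    have hroot : Real.sqrt (1 - (k / x) ^ 2) = s / x := by
      rw [show (1 : ℝ) - (k / x) ^ 2 = (x ^ 2 - k ^ 2) / x ^ 2 by
        field_simp, Real.sqrt_div hsub.le, Real.sqrt_sq hx0.le]
    -- sqrt part
    have hq : HasDerivAt (fun y : ℝ => y ^ 2 - k ^ 2) (2 * x) x := by
      simpa using ((hasDerivAt_pow 2 x).sub_const (k ^ 2))
    have hsq : HasDerivAt (fun y : ℝ => Real.sqrt (y ^ 2 - k ^ 2))
        (1 / (2 * s) * (2 * x)) x :=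
      (Real.hasDerivAt_sqrt hsub.ne').comp x hq
    -- log part
    have hargpos : 0 < (x + s) / k := by
      have : 0 < x + s := by positivity
      positivity
    have hlog : HasDerivAt (fun y : ℝ => Real.log ((y + Real.sqrt (y ^ 2 - k ^ 2)) / k))
        ((1 + 1 / (2 * s) * (2 * x)) / k / ((x + s) / k)) x :=
      (((hasDerivAt_id x).add hsq).div_const k).log hargpos.ne'
    -- cube part
    have hcube : HasDerivAt (fun y : ℝ => y ^ 3 / 3) (x ^ 2) x := by
      simpa using ((hasDerivAt_pow 3 x).div_const 3)
    have hlin : HasDerivAt (fun y : ℝ => k * y / 6) (k / 6) x := by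
      simpa using (((hasDerivAt_id x).const_mul k).div_const 6)
    have htot := ((hcube.mul harc).sub (hlin.mul hsq |>.add
        ((hasDerivAt_const x (k * x / 6)).mul hsq |>.sub
          ((hasDerivAt_const x (k * x / 6)).mul hsq)))).sub
        ((hasDerivAt_const x (k ^ 3 / 6)).mul hlog)
    -- assemble more carefully:
    have hterm2 : HasDerivAt (fun y : ℝ => k * y / 6 * Real.sqrt (y ^ 2 - k ^ 2))
        (k / 6 * s + k * x / 6 * (1 / (2 * s) * (2 * x))) x := hlin.mul hsq
    have hterm3 : HasDerivAt (fun y : ℝ =>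
        k ^ 3 / 6 * Real.log ((y + Real.sqrt (y ^ 2 - k ^ 2)) / k))
        (k ^ 3 / 6 * ((1 + 1 / (2 * s) * (2 * x)) / k / ((x + s) / k))) x :=
      hlog.const_mul _
    have hterm1 : HasDerivAt (fun y : ℝ => y ^ 3 / 3 * Real.arccos (k / y))
        (x ^ 2 * Real.arccos (k / x) +
          x ^ 3 / 3 * (-(1 / Real.sqrt (1 - (k / x) ^ 2)) * (k * -(x ^ 2)⁻¹))) x :=
      hcube.mul harc
    have hFd := (hterm1.sub hterm2).sub hterm3
    refine hFd.congr_deriv ?_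
    symm
    rw [hroot]
    have hxs : (0:ℝ) < x + s := by positivity
    field_simp
    linear_combination (3 * k * (x + s)) * hs2
  have hint : IntervalIntegrable (fun ℓ => ℓ ^ 2 * Real.arccos (k / ℓ))
      MeasureTheory.volume k r := by
    apply ContinuousOn.intervalIntegrable
    rw [Set.uIcc_of_le hkr]
    exact (continuousOn_pow 2).mul
      (Real.continuous_arccos.comp_continuousOn
        (continuousOn_const.div continuousOn_id (fun x hx => (hk.trans_le hx.1).ne')))
  rw [intervalIntegral.integral_eq_sub_of_hasDerivAt_of_le hkr hcont hderiv hint, hFk,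
    sub_zero]
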